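/- If G is a finite simple graph without isolated vertices, then |γ_Lg(G) − γ'_Lg(G)| ≤ 1. -/

import Mathlib

/- Formalization of the domination games from "The variety of domination games".

A game is specified by a legality predicate `legal : List V → V → Prop`, where the list
records the previously played vertices (most recent first).  Players alternate moves;
each move must be legal; the game ends when no legal move exists.  Dominator wants to
minimize, Staller to maximize, the total number of moves.

`canEnd legal k turn h` states that, with history `h` and the player to move given by
`turn` (`true` = Dominator), Dominator can guarantee that at most `k` further moves are
played (against any play of Staller).  The value of the game under optimal play by both
players is then the least such `k` from the empty history. -/

/-- The closed neighborhood `N[v]` of a vertex. -/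
def closedNbhd {V : Type*} (G : SimpleGraph V) (v : V) : Set V :=
  insert v (G.neighborSet v)

/-- `⋃_{u ∈ h} N[u]` : the set of vertices dominated by the moves in `h`. -/
def dominatedBy {V : Type*} (G : SimpleGraph V) (h : List V) : Set V :=
  ⋃ u ∈ h, closedNbhd G u

/-- `⋃_{u ∈ h} N(u)` : the set of vertices totally dominated by the moves in `h`. -/
def totDominatedBy {V : Type*} (G : SimpleGraph V) (h : List V) : Set V :=
  ⋃ u ∈ h, G.neighborSet u

/-- Legality in the domination game: `N[v] \ ⋃_{j<i} N[v_j] ≠ ∅`. -/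
def dgLegal {V : Type*} (G : SimpleGraph V) (h : List V) (v : V) : Prop :=
  (closedNbhd G v \ dominatedBy G h).Nonempty

/-- Legality in the total domination game: `N(v) \ ⋃_{j<i} N(v_j) ≠ ∅`. -/
def tgLegal {V : Type*} (G : SimpleGraph V) (h : List V) (v : V) : Prop :=
  (G.neighborSet v \ totDominatedBy G h).Nonempty

/-- Legality in the Z-domination game on `G|A`: `N(v) \ (A ∪ ⋃_{j<i} N[v_j]) ≠ ∅`. -/
def zLegal {V : Type*} (G : SimpleGraph V) (A : Set V) (h : List V) (v : V) : Prop :=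
  (G.neighborSet v \ (A ∪ dominatedBy G h)).Nonempty

/-- Legality in the LL-domination game on `G|A`: `N[v] \ (A ∪ ⋃_{j<i} N(v_j)) ≠ ∅`. -/
def llLegal {V : Type*} (G : SimpleGraph V) (A : Set V) (h : List V) (v : V) : Prop :=
  (closedNbhd G v \ (A ∪ totDominatedBy G h)).Nonempty

/-- Legality in the L-domination game on `G|A`: as in the LL-game, and moreover no vertex
may be played twice. -/
def lLegal {V : Type*} (G : SimpleGraph V) (A : Set V) (h : List V) (v : V) : Prop :=
  llLegal G A h v ∧ v ∉ h

/-- `canEnd legal k turn h` : with previously played vertices `h` and the player to move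
given by `turn` (`true` = Dominator, `false` = Staller), Dominator has a strategy
guaranteeing that at most `k` further moves are made. -/
def canEnd {V : Type*} (legal : List V → V → Prop) : ℕ → Bool → List V → Prop
  | 0, _, h => ∀ v, ¬ legal h v
  | k+1, true, h => (∀ v, ¬ legal h v) ∨ ∃ v, legal h v ∧ canEnd legal k false (v :: h)
  | k+1, false, h => ∀ v, legal h v → canEnd legal k true (v :: h)

/-- The number of moves in the game with legality predicate `legal` when both players play
optimally (Dominator minimizing, Staller maximizing the number of moves); `dFirst = true`
means Dominator makes the first move. -/
noncomputable def gameVal {V : Type*} (legal : List V → V → Prop) (dFirst : Bool) : ℕ :=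
  sInf {k | canEnd legal k dFirst []}

/-- The game Z-domination number `γ_Zg(G|A)` (Dominator starts). -/
noncomputable def gammaZgA {V : Type*} (G : SimpleGraph V) (A : Set V) : ℕ :=
  gameVal (zLegal G A) true

/-- The Staller-start game Z-domination number `γ'_Zg(G|A)`. -/
noncomputable def gammaZgA' {V : Type*} (G : SimpleGraph V) (A : Set V) : ℕ :=
  gameVal (zLegal G A) false

/-- The game L-domination number `γ_Lg(G|A)` (Dominator starts). -/
noncomputable def gammaLgA {V : Type*} (G : SimpleGraph V) (A : Set V) : ℕ :=
  gameVal (lLegal G A) true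

/-- The Staller-start game L-domination number `γ'_Lg(G|A)`. -/
noncomputable def gammaLgA' {V : Type*} (G : SimpleGraph V) (A : Set V) : ℕ :=
  gameVal (lLegal G A) false

/-- The game LL-domination number `γ_LLg(G|A)` (Dominator starts). -/
noncomputable def gammaLLgA {V : Type*} (G : SimpleGraph V) (A : Set V) : ℕ :=
  gameVal (llLegal G A) true

/-- The Staller-start game LL-domination number `γ'_LLg(G|A)`. -/
noncomputable def gammaLLgA' {V : Type*} (G : SimpleGraph V) (A : Set V) : ℕ :=
  gameVal (llLegal G A) false

/-- The game domination number `γ_g(G)` (Dominator starts). -/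
noncomputable def gammaG {V : Type*} (G : SimpleGraph V) : ℕ :=
  gameVal (dgLegal G) true

/-- The game total domination number `γ_tg(G)` (Dominator starts). -/
noncomputable def gammaTg {V : Type*} (G : SimpleGraph V) : ℕ :=
  gameVal (tgLegal G) true

/-- The game Z-domination number `γ_Zg(G)` (Dominator starts). -/
noncomputable def gammaZg {V : Type*} (G : SimpleGraph V) : ℕ := gammaZgA G ∅

/-- The Staller-start game Z-domination number `γ'_Zg(G)`. -/
noncomputable def gammaZg' {V : Type*} (G : SimpleGraph V) : ℕ := gammaZgA' G ∅

/-- The game L-domination number `γ_Lg(G)` (Dominator starts). -/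
noncomputable def gammaLg {V : Type*} (G : SimpleGraph V) : ℕ := gammaLgA G ∅

/-- The Staller-start game L-domination number `γ'_Lg(G)`. -/
noncomputable def gammaLg' {V : Type*} (G : SimpleGraph V) : ℕ := gammaLgA' G ∅

/-- The game LL-domination number `γ_LLg(G)` (Dominator starts). -/
noncomputable def gammaLLg {V : Type*} (G : SimpleGraph V) : ℕ := gammaLLgA G ∅

/-- The Staller-start game LL-domination number `γ'_LLg(G)`. -/
noncomputable def gammaLLg' {V : Type*} (G : SimpleGraph V) : ℕ := gammaLLgA' G ∅

/-- `G` has no isolated vertices. -/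
def isolateFree {V : Type*} (G : SimpleGraph V) : Prop := ∀ v : V, ∃ u, G.Adj v u

/-- The domination number `γ(G)`. -/
noncomputable def domNum {V : Type*} (G : SimpleGraph V) : ℕ :=
  sInf {k | ∃ S : Finset V, S.card = k ∧ ∀ v : V, ∃ u ∈ S, v ∈ closedNbhd G u}

/-- The total domination number `γ_t(G)`. -/
noncomputable def totDomNum {V : Type*} (G : SimpleGraph V) : ℕ :=
  sInf {k | ∃ S : Finset V, S.card = k ∧ ∀ v : V, ∃ u ∈ S, G.Adj u v}

namespace LGameAux

variable {V : Type*} (G : SimpleGraph V)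

lemma tot_cons (v : V) (h : List V) :
    totDominatedBy G (v :: h) = G.neighborSet v ∪ totDominatedBy G h := by
  simp [totDominatedBy]

lemma lLegal_iff (h : List V) (v : V) :
    lLegal G ∅ h v ↔ (closedNbhd G v \ totDominatedBy G h).Nonempty ∧ v ∉ h := by
  simp [lLegal, llLegal]

lemma nbhd_subset_tot {x : V} {h : List V} (hx : x ∈ h) :
    G.neighborSet x ⊆ totDominatedBy G h :=
  Set.subset_biUnion_of_mem hx

lemma nbhd_subset_closed (x : V) : G.neighborSet x ⊆ closedNbhd G x :=
  Set.subset_insert _ _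

/-- `g` is an "imagined" position which is behind the real position `r`:
everything dominated in imagination is dominated in reality, and every vertex played
in imagination is either played in reality or forever illegal in reality. -/
def SubS (g r : List V) : Prop :=
  (∀ x ∈ g, x ∈ r ∨ closedNbhd G x ⊆ totDominatedBy G r) ∧
    totDominatedBy G g ⊆ totDominatedBy G r

/-- Like `SubS`, but the imagination contains one extra "live" vertex `v`. -/
def Sub1 (v : V) (g r : List V) : Prop :=
  v ∈ g ∧ v ∉ r ∧
  (∀ x ∈ g, x = v ∨ x ∈ r ∨
      closedNbhd G x ⊆ totDominatedBy G r ∪ G.neighborSet v) ∧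
    totDominatedBy G g ⊆ totDominatedBy G r ∪ G.neighborSet v

variable {G}

lemma legal_of_sub {g r : List V} (hs : SubS G g r) {v : V}
    (hv : lLegal G ∅ r v) : lLegal G ∅ g v := by
  rw [lLegal_iff] at hv ⊢
  obtain ⟨⟨x, hx1, hx2⟩, hvr⟩ := hv
  refine ⟨⟨x, hx1, fun hx => hx2 (hs.2 hx)⟩, fun hvg => ?_⟩
  rcases hs.1 v hvg with h | h
  · exact hvr h
  · exact hx2 (h hx1)

lemma subS_refl (g : List V) : SubS G g g :=
  ⟨fun x hx => Or.inl hx, subset_rfl⟩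

lemma subS_nil (r : List V) : SubS G [] r := by
  constructor
  · intro x hx; simp at hx
  · simp [totDominatedBy]

lemma subS_cons {g r : List V} (hs : SubS G g r) (v : V) :
    SubS G (v :: g) (v :: r) := by
  constructor
  · intro x hx
    rcases List.mem_cons.1 hx with rfl | hx
    · exact Or.inl (List.mem_cons_self)
    · rcases hs.1 x hx with h | h
      · exact Or.inl (List.mem_cons_of_mem _ h)
      · exact Or.inr (h.trans (by rw [tot_cons]; exact Set.subset_union_right))
  · rw [tot_cons, tot_cons]
    exact Set.union_subset_union_right _ hs.2

lemma subS_cons_right {g r : List V} (hs : SubS G g r) (u : V) :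
    SubS G g (u :: r) := by
  have ht : totDominatedBy G r ⊆ totDominatedBy G (u :: r) := by
    rw [tot_cons]; exact Set.subset_union_right
  constructor
  · intro x hx
    rcases hs.1 x hx with h | h
    · exact Or.inl (List.mem_cons_of_mem _ h)
    · exact Or.inr (h.trans ht)
  · exact hs.2.trans ht

lemma subS_cons_left {g r : List V} (hs : SubS G g r) {v : V}
    (hv : v ∈ r ∨ closedNbhd G v ⊆ totDominatedBy G r) : SubS G (v :: g) r := by
  have hnv : G.neighborSet v ⊆ totDominatedBy G r := by
    rcases hv with hv | hv
    · exact nbhd_subset_tot G hv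
    · exact (nbhd_subset_closed G v).trans hv
  constructor
  · intro x hx
    rcases List.mem_cons.1 hx with rfl | hx
    · exact hv
    · exact hs.1 x hx
  · rw [tot_cons]
    exact Set.union_subset hnv hs.2

lemma sub1_base {g r : List V} (hs : SubS G g r) {v : V} (hv : v ∉ r) :
    Sub1 G v (v :: g) r := by
  refine ⟨List.mem_cons_self, hv, ?_, ?_⟩
  · intro x hx
    rcases List.mem_cons.1 hx with rfl | hx
    · exact Or.inl rfl
    · rcases hs.1 x hx with h | h
      · exact Or.inr (Or.inl h)
      · exact Or.inr (Or.inr (h.trans Set.subset_union_left))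
  · rw [tot_cons, Set.union_comm]
    exact Set.union_subset_union_left _ hs.2

lemma sub1_cons_right {v : V} {g r : List V} (h1 : Sub1 G v g r) {u : V}
    (hu : v ≠ u) : Sub1 G v g (u :: r) := by
  have ht : totDominatedBy G r ⊆ totDominatedBy G (u :: r) := by
    rw [tot_cons]; exact Set.subset_union_right
  refine ⟨h1.1, ?_, ?_, h1.2.2.2.trans (Set.union_subset_union_left _ ht)⟩
  · intro hmem
    rcases List.mem_cons.1 hmem with h | h
    · exact hu h
    · exact h1.2.1 h
  · intro x hx
    rcases h1.2.2.1 x hx with h | h | h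
    · exact Or.inl h
    · exact Or.inr (Or.inl (List.mem_cons_of_mem _ h))
    · exact Or.inr (Or.inr (h.trans (Set.union_subset_union_left _ ht)))

lemma sub1_cons_both {v : V} {g r : List V} (h1 : Sub1 G v g r) {u : V}
    (hu : v ≠ u) : Sub1 G v (u :: g) (u :: r) := by
  have h2 := sub1_cons_right h1 hu
  refine ⟨List.mem_cons_of_mem _ h1.1, h2.2.1, ?_, ?_⟩
  · intro x hx
    rcases List.mem_cons.1 hx with rfl | hx
    · exact Or.inr (Or.inl (List.mem_cons_self))
    · exact h2.2.2.1 x hx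
  · rw [tot_cons, tot_cons, Set.union_assoc]
    exact Set.union_subset_union_right _ h1.2.2.2

/-- If the extra imagined vertex `v` is dead in reality, the discrepancy disappears. -/
lemma subS_of_sub1_dead {v : V} {g r : List V} (h1 : Sub1 G v g r)
    (hd : closedNbhd G v ⊆ totDominatedBy G r) : SubS G g r := by
  have hnv : G.neighborSet v ⊆ totDominatedBy G r := (nbhd_subset_closed G v).trans hd
  constructor
  · intro x hx
    rcases h1.2.2.1 x hx with rfl | h | h
    · exact Or.inr hd
    · exact Or.inl h
    · exact Or.inr (h.trans (Set.union_subset subset_rfl hnv))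
  · exact h1.2.2.2.trans (Set.union_subset subset_rfl hnv)

/-- If reality plays the extra imagined vertex `v`, the discrepancy disappears. -/
lemma subS_cons_of_sub1 {v : V} {g r : List V} (h1 : Sub1 G v g r) :
    SubS G g (v :: r) := by
  have ht : totDominatedBy G r ∪ G.neighborSet v ⊆ totDominatedBy G (v :: r) := by
    rw [tot_cons, Set.union_comm]
  constructor
  · intro x hx
    rcases h1.2.2.1 x hx with rfl | h | h
    · exact Or.inl (List.mem_cons_self)
    · exact Or.inl (List.mem_cons_of_mem _ h)
    · exact Or.inr (h.trans ht)
  · exact h1.2.2.2.trans ht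

lemma not_legal_cases {h : List V} {v : V} (hn : ¬ lLegal G ∅ h v) :
    v ∈ h ∨ closedNbhd G v ⊆ totDominatedBy G h := by
  rw [lLegal_iff] at hn
  by_cases hm : v ∈ h
  · exact Or.inl hm
  · refine Or.inr ?_
    intro x hx
    by_contra hxt
    exact hn ⟨⟨x, hx, hxt⟩, hm⟩

lemma canEnd_mono {legal : List V → V → Prop} :
    ∀ (k : ℕ) (t : Bool) (h : List V), canEnd legal k t h → canEnd legal (k+1) t h := by
  intro k
  induction k with
  | zero =>
    intro t h hc
    cases t
    · intro v hv; exact absurd hv (hc v)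
    · exact Or.inl hc
  | succ k ih =>
    intro t h hc
    cases t
    · intro v hv; exact ih true _ (hc v hv)
    · rcases hc with h0 | ⟨v, hv, hc⟩
      · exact Or.inl h0
      · exact Or.inr ⟨v, hv, ih false _ hc⟩

theorem mainLemma : ∀ k : ℕ,
    (∀ (t : Bool) (g r : List V), SubS G g r →
        canEnd (lLegal G ∅) k t g → canEnd (lLegal G ∅) k t r) ∧
    (∀ g r : List V, SubS G g r →
        canEnd (lLegal G ∅) k false g → canEnd (lLegal G ∅) (k+1) true r) ∧
    (∀ g r : List V, SubS G g r →
        canEnd (lLegal G ∅) k true g → canEnd (lLegal G ∅) (k+1) false r) ∧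
    (∀ (v : V) (g r : List V), Sub1 G v g r →
        canEnd (lLegal G ∅) k false g → canEnd (lLegal G ∅) (k+1) true r) ∧
    (∀ (v : V) (g r : List V), Sub1 G v g r →
        canEnd (lLegal G ∅) k true g → canEnd (lLegal G ∅) (k+2) true r) := by
  intro k
  induction k using Nat.strong_induction_on with
  | _ k IH =>
  have hC : ∀ (t : Bool) (g r : List V), SubS G g r →
      canEnd (lLegal G ∅) k t g → canEnd (lLegal G ∅) k t r := by
    intro t g r hs hc
    cases k with
    | zero => exact fun v hv => hc v (legal_of_sub hs hv)
    | succ k =>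
      cases t with
      | false =>
        intro u hu
        exact (IH k k.lt_succ_self).1 true _ _ (subS_cons hs u) (hc u (legal_of_sub hs hu))
      | true =>
        rcases hc with h0 | ⟨v, hv, hce⟩
        · exact Or.inl (fun u hu => h0 u (legal_of_sub hs hu))
        · by_cases hrv : lLegal G ∅ r v
          · exact Or.inr ⟨v, hrv, (IH k k.lt_succ_self).1 false _ _ (subS_cons hs v) hce⟩
          · exact (IH k k.lt_succ_self).2.1 _ _ (subS_cons_left hs (not_legal_cases hrv)) hce
  have hD : ∀ g r : List V, SubS G g r →
      canEnd (lLegal G ∅) k false g → canEnd (lLegal G ∅) (k+1) true r := by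
    intro g r hs hc
    by_cases hex : ∃ w, lLegal G ∅ r w
    · obtain ⟨w, hw⟩ := hex
      have hgw := legal_of_sub hs hw
      cases k with
      | zero => exact absurd hgw (hc w)
      | succ k =>
        exact Or.inr ⟨w, hw, (IH k k.lt_succ_self).2.2.1 _ _ (subS_cons hs w) (hc w hgw)⟩
    · exact Or.inl (fun v hv => hex ⟨v, hv⟩)
  have hGl : ∀ g r : List V, SubS G g r →
      canEnd (lLegal G ∅) k true g → canEnd (lLegal G ∅) (k+1) false r := by
    intro g r hs hc u hu
    have hgu := legal_of_sub hs hu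
    cases k with
    | zero => exact absurd hgu (hc u)
    | succ k =>
      rcases hc with h0 | ⟨v, hv, hce⟩
      · exact absurd hgu (h0 u)
      · by_cases huv : u = v
        · subst huv
          exact (IH k k.lt_succ_self).2.1 _ _ (subS_cons hs u) hce
        · by_cases hvr : v ∈ r
          · by_cases hlu : lLegal G ∅ (v :: g) u
            · cases k with
              | zero => exact absurd hlu (hce u)
              | succ k =>
                have hce2 := hce u hlu
                have hsub : SubS G (u :: v :: g) (u :: r) :=
                  subS_cons (subS_cons_left hs (Or.inl hvr)) u
                have h3 := (IH k (by omega)).1 true _ _ hsub hce2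
                exact canEnd_mono _ _ _ (canEnd_mono _ _ _ h3)
            · have hsub : SubS G (v :: g) (u :: r) :=
                subS_cons_right (subS_cons_left hs (Or.inl hvr)) u
              exact (IH k k.lt_succ_self).2.1 _ _ hsub hce
          · by_cases hlu : lLegal G ∅ (v :: g) u
            · cases k with
              | zero => exact absurd hlu (hce u)
              | succ k =>
                have hce2 := hce u hlu
                have hsub : Sub1 G v (u :: v :: g) (u :: r) :=
                  sub1_cons_both (sub1_base hs hvr) (fun h => huv h.symm)
                exact (IH k (by omega)).2.2.2.2 v _ _ hsub hce2
            · have hsub : Sub1 G v (v :: g) (u :: r) :=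
                sub1_cons_right (sub1_base hs hvr) (fun h => huv h.symm)
              exact (IH k k.lt_succ_self).2.2.2.1 v _ _ hsub hce
  have hJ : ∀ (v : V) (g r : List V), Sub1 G v g r →
      canEnd (lLegal G ∅) k false g → canEnd (lLegal G ∅) (k+1) true r := by
    intro v g r h1 hc
    by_cases hlv : lLegal G ∅ r v
    · exact Or.inr ⟨v, hlv, hC false _ _ (subS_cons_of_sub1 h1) hc⟩
    · rcases not_legal_cases hlv with h | h
      · exact absurd h h1.2.1
      · exact hD _ _ (subS_of_sub1_dead h1 h) hc
  have hI : ∀ (v : V) (g r : List V), Sub1 G v g r →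
      canEnd (lLegal G ∅) k true g → canEnd (lLegal G ∅) (k+2) true r := by
    intro v g r h1 hc
    by_cases hlv : lLegal G ∅ r v
    · exact Or.inr ⟨v, hlv, hGl _ _ (subS_cons_of_sub1 h1) hc⟩
    · rcases not_legal_cases hlv with h | h
      · exact absurd h h1.2.1
      · exact canEnd_mono _ _ _
          (canEnd_mono _ _ _ (hC true _ _ (subS_of_sub1_dead h1 h) hc))
  exact ⟨hC, hD, hGl, hJ, hI⟩

lemma exists_canEnd [Fintype V] :
    ∀ (k : ℕ) (t : Bool) (h : List V), h.Nodup → Fintype.card V ≤ k + h.length →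
      canEnd (lLegal G ∅) k t h := by
  classical
  intro k
  induction k with
  | zero =>
    intro t h hnd hlen v hv
    refine hv.2 ?_
    have h1 : h.toFinset.card = h.length := List.toFinset_card_of_nodup hnd
    have h2 : h.toFinset.card ≤ Fintype.card V := Finset.card_le_univ _
    have h3 : h.toFinset = Finset.univ := Finset.eq_univ_of_card _ (by omega)
    rw [← List.mem_toFinset, h3]
    exact Finset.mem_univ v
  | succ k ih =>
    intro t h hnd hlen
    have step : ∀ v, lLegal G ∅ h v → canEnd (lLegal G ∅) k true (v :: h) ∧
        canEnd (lLegal G ∅) k false (v :: h) := by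
      intro v hv
      have hnd' : (v :: h).Nodup := List.nodup_cons.2 ⟨hv.2, hnd⟩
      have hlen' : Fintype.card V ≤ k + (v :: h).length := by
        simp only [List.length_cons]; omega
      exact ⟨ih true _ hnd' hlen', ih false _ hnd' hlen'⟩
    cases t with
    | false => exact fun v hv => (step v hv).1
    | true =>
      by_cases hex : ∃ v, lLegal G ∅ h v
      · obtain ⟨v, hv⟩ := hex
        exact Or.inr ⟨v, hv, (step v hv).2⟩
      · exact Or.inl (fun v hv => hex ⟨v, hv⟩)

end LGameAux

theorem l_game_D_S_diff_le_one' {V : Type*} [Fintype V] (G : SimpleGraph V) :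
    |((gameVal (lLegal G ∅) true : ℕ) : ℤ) - ((gameVal (lLegal G ∅) false : ℕ) : ℤ)| ≤ 1 := by
  classical
  have hne1 : (Fintype.card V) ∈ {k | canEnd (lLegal G ∅) k true []} :=
    LGameAux.exists_canEnd _ _ _ List.nodup_nil (by simp)
  have hne0 : (Fintype.card V) ∈ {k | canEnd (lLegal G ∅) k false []} :=
    LGameAux.exists_canEnd _ _ _ List.nodup_nil (by simp)
  have ca : canEnd (lLegal G ∅) (gameVal (lLegal G ∅) true) true [] :=
    Nat.sInf_mem ⟨_, hne1⟩
  have cb : canEnd (lLegal G ∅) (gameVal (lLegal G ∅) false) false [] :=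
    Nat.sInf_mem ⟨_, hne0⟩
  have hab : gameVal (lLegal G ∅) true ≤ gameVal (lLegal G ∅) false + 1 :=
    Nat.sInf_le ((LGameAux.mainLemma _).2.1 [] [] (LGameAux.subS_refl _) cb)
  have hba : gameVal (lLegal G ∅) false ≤ gameVal (lLegal G ∅) true + 1 :=
    Nat.sInf_le ((LGameAux.mainLemma _).2.2.1 [] [] (LGameAux.subS_refl _) ca)
  rw [abs_le]
  omega

/-- The Dominator-start and Staller-start game L-domination numbers differ by at most one. -/
theorem l_game_D_S_diff_le_one {V : Type*} [Fintype V] (G : SimpleGraph V)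
    (hG : isolateFree G) :
    |(gammaLg G : ℤ) - (gammaLg' G : ℤ)| ≤ 1 := by
  simpa [gammaLg, gammaLgA, gammaLg', gammaLgA'] using l_game_D_S_diff_le_one' G
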